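/- For natural numbers a, b ≥ 1, the list chromatic number of the complete bipartite graph K_{a,b} equals a + 1 if and only if b ≥ a^a. -/

import Mathlib

open SimpleGraph

/-- A proper coloring of `G` from the list assignment `L`. -/
def IsProperListColoring {V : Type*} (G : SimpleGraph V) (L : V → Finset ℕ) (f : V → ℕ) : Prop :=
  (∀ v, f v ∈ L v) ∧ ∀ ⦃v w⦄, G.Adj v w → f v ≠ f w

/-- `G` is `k`-choosable: every `k`-assignment admits a proper coloring. -/
def Choosable {V : Type*} (G : SimpleGraph V) (k : ℕ) : Prop :=
  ∀ L : V → Finset ℕ, (∀ v, (L v).card = k) → ∃ f, IsProperListColoring G L f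

/-- The list chromatic number: the least `k` such that `G` is `k`-choosable. -/
noncomputable def listChromaticNumber {V : Type*} (G : SimpleGraph V) : ℕ :=
  sInf {k | Choosable G k}

/-- The list color function `P_ℓ(G,k)`: the minimum number of proper `L`-colorings
over all `k`-assignments `L`. -/
noncomputable def listColorFunction {V : Type*} (G : SimpleGraph V) (k : ℕ) : ℕ :=
  sInf {n | ∃ L : V → Finset ℕ, (∀ v, (L v).card = k) ∧
    n = Nat.card {f : V → ℕ // IsProperListColoring G L f}}

/-- `G` is strong `k`-chromatic-choosable: `χ(G) = k` and every `(k-1)`-assignment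
admitting no proper coloring is constant. -/
def StrongChromChoosable {V : Type*} (G : SimpleGraph V) (k : ℕ) : Prop :=
  G.chromaticNumber = k ∧
  ∀ L : V → Finset ℕ, (∀ v, (L v).card = k - 1) →
    (¬ ∃ f, IsProperListColoring G L f) → ∀ v w, L v = L w

lemma aux_choosable_mono {V : Type*} (G : SimpleGraph V) {k m : ℕ} (hkm : k ≤ m)
    (h : Choosable G k) : Choosable G m := by
  intro L hL
  have hsub : ∀ v, ∃ B ⊆ L v, B.card = k := fun v =>
    Finset.exists_subset_card_eq (by rw [hL v]; exact hkm)
  choose L' hL'sub hL'card using hsub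
  obtain ⟨f, hf1, hf2⟩ := h L' hL'card
  exact ⟨f, fun v => hL'sub v (hf1 v), hf2⟩

/-- Given choices `c` on the left side avoiding-coverage of right lists,
build a proper coloring. -/
lemma aux_build_coloring {a b : ℕ} (L : Fin a ⊕ Fin b → Finset ℕ) (c : Fin a → ℕ)
    (hc : ∀ i, c i ∈ L (Sum.inl i))
    (hgood : ∀ j : Fin b, (L (Sum.inr j) \ Finset.univ.image c).Nonempty) :
    ∃ f, IsProperListColoring (completeBipartiteGraph (Fin a) (Fin b)) L f := by
  choose g hg using hgood
  refine ⟨Sum.elim c g, ?_, ?_⟩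
  · rintro (i | j)
    · exact hc i
    · exact (Finset.mem_sdiff.mp (hg j)).1
  · rintro (i | j) (i' | j') hadj <;> simp only [completeBipartiteGraph_adj] at hadj <;>
      simp only [Sum.elim_inl, Sum.elim_inr]
    · simp at hadj
    · intro h
      exact (Finset.mem_sdiff.mp (hg j')).2 (Finset.mem_image.mpr ⟨i, Finset.mem_univ i, h⟩)
    · intro h
      exact (Finset.mem_sdiff.mp (hg j)).2 (Finset.mem_image.mpr ⟨i', Finset.mem_univ i', h.symm⟩)
    · simp at hadj

lemma aux_choosable_succ (a b : ℕ) :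
    Choosable (completeBipartiteGraph (Fin a) (Fin b)) (a + 1) := by
  intro L hL
  have hne : ∀ i : Fin a, (L (Sum.inl i)).Nonempty := fun i =>
    Finset.card_pos.mp (by rw [hL]; omega)
  choose c hc using hne
  apply aux_build_coloring L c hc
  intro j
  rw [Finset.sdiff_nonempty]
  intro hsub
  have h1 : (Finset.univ.image c).card ≤ a := by
    calc (Finset.univ.image c).card ≤ (Finset.univ : Finset (Fin a)).card := Finset.card_image_le
      _ = a := by simp
  have := Finset.card_le_card hsub
  rw [hL] at this
  omega

/-- If `b < a^a` then `K_{a,b}` is `a`-choosable (Hoffman–Johnson hard direction). -/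
lemma aux_choosable_a (a b : ℕ) (ha : 1 ≤ a) (hb : b < a ^ a) :
    Choosable (completeBipartiteGraph (Fin a) (Fin b)) a := by
  intro L hL
  -- the set of admissible choice tuples on the left side
  set S : Finset (Fin a → ℕ) := Fintype.piFinset (fun i => L (Sum.inl i)) with hS
  have hScard : S.card = a ^ a := by
    rw [hS, Fintype.card_piFinset]
    simp [hL]
  -- suppose every tuple is "bad"
  by_contra hno
  push_neg at hno
  have hbad : ∀ c ∈ S, ∃ j : Fin b, L (Sum.inr j) ⊆ Finset.univ.image c := by
    intro c hcS
    by_contra hgood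
    push_neg at hgood
    obtain ⟨f, hf⟩ := aux_build_coloring L c
      (fun i => (Fintype.mem_piFinset.mp hcS) i)
      (fun j => Finset.sdiff_nonempty.mpr (hgood j))
    exact (hno f) hf
  -- hence for every admissible tuple, its image equals some right list
  have himg : ∀ c ∈ S, ∃ j : Fin b, Finset.univ.image c = L (Sum.inr j) := by
    intro c hcS
    obtain ⟨j, hj⟩ := hbad c hcS
    refine ⟨j, ?_⟩
    have hle : (Finset.univ.image c).card ≤ a := by
      calc (Finset.univ.image c).card ≤ (Finset.univ : Finset (Fin a)).card := Finset.card_image_le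
        _ = a := by simp
    exact ((Finset.eq_of_subset_of_card_le hj (by rw [hL]; exact hle))).symm
  -- images have full card a, so all tuples are injective; so left lists are pairwise disjoint
  have hcard_img : ∀ c ∈ S, (Finset.univ.image c).card = a := by
    intro c hcS
    obtain ⟨j, hj⟩ := himg c hcS
    rw [hj, hL]
  have hdisj : ∀ i i' : Fin a, i ≠ i' → ∀ x, x ∈ L (Sum.inl i) → x ∉ L (Sum.inl i') := by
    intro i i' hii' x hxi hxi'
    have hne : ∀ k : Fin a, (L (Sum.inl k)).Nonempty := fun k =>
      Finset.card_pos.mp (by rw [hL]; omega)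
    choose c0 hc0 using hne
    set c : Fin a → ℕ := fun k => if k = i ∨ k = i' then x else c0 k with hcdef
    have hcS : c ∈ S := by
      rw [hS, Fintype.mem_piFinset]
      intro k
      by_cases hk : k = i ∨ k = i'
      · rcases hk with rfl | rfl <;> simp [hcdef, hxi, hxi']
      · simp only [hcdef, if_neg hk]
        exact hc0 k
    have : (Finset.univ.image c).card ≤ a - 1 := by
      have hsub : Finset.univ.image c ⊆ (Finset.univ.erase i').image c := by
        intro y hy
        obtain ⟨k, _, rfl⟩ := Finset.mem_image.mp hy
        by_cases hk : k = i'
        · subst hk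
          refine Finset.mem_image.mpr ⟨i, Finset.mem_erase.mpr ⟨hii', Finset.mem_univ i⟩, ?_⟩
          simp [hcdef]
        · exact Finset.mem_image.mpr ⟨k, Finset.mem_erase.mpr ⟨hk, Finset.mem_univ k⟩, rfl⟩
      calc (Finset.univ.image c).card ≤ ((Finset.univ.erase i').image c).card :=
            Finset.card_le_card hsub
        _ ≤ ((Finset.univ : Finset (Fin a)).erase i').card := Finset.card_image_le
        _ = a - 1 := by rw [Finset.card_erase_of_mem (Finset.mem_univ i')]; simp
    have := hcard_img c hcS
    omega
  -- the image map is injective on S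
  have hinj : Set.InjOn (fun c : Fin a → ℕ => Finset.univ.image c) S := by
    intro c hcS c' hc'S h
    have h' : Finset.univ.image c = Finset.univ.image c' := h
    funext i
    have hci : c i ∈ Finset.univ.image c' := by
      rw [← h']; exact Finset.mem_image.mpr ⟨i, Finset.mem_univ i, rfl⟩
    obtain ⟨k, _, hk⟩ := Finset.mem_image.mp hci
    have hciL : c i ∈ L (Sum.inl i) := (Fintype.mem_piFinset.mp hcS) i
    have hc'kL : c' k ∈ L (Sum.inl k) := (Fintype.mem_piFinset.mp hc'S) k
    rw [hk] at hc'kL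
    by_cases hik : k = i
    · subst hik; exact hk.symm
    · exact absurd hciL (fun hh => hdisj k i hik (c i) hc'kL hh)
  -- count: a^a = |S| ≤ number of right lists ≤ b
  have hcount : S.card ≤ (Finset.univ.image (fun j : Fin b => L (Sum.inr j))).card := by
    apply Finset.card_le_card_of_injOn (fun c => Finset.univ.image c) _ hinj
    intro c hcS
    obtain ⟨j, hj⟩ := himg c hcS
    exact Finset.mem_image.mpr ⟨j, Finset.mem_univ j, hj.symm⟩
  have hWle : (Finset.univ.image (fun j : Fin b => L (Sum.inr j))).card ≤ b := by
    calc (Finset.univ.image (fun j : Fin b => L (Sum.inr j))).card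
        ≤ (Finset.univ : Finset (Fin b)).card := Finset.card_image_le
      _ = b := by simp
  rw [hScard] at hcount
  omega

/-- If `a^a ≤ b` then `K_{a,b}` is not `a`-choosable. -/
lemma aux_not_choosable_a (a b : ℕ) (ha : 1 ≤ a) (hb : a ^ a ≤ b) :
    ¬ Choosable (completeBipartiteGraph (Fin a) (Fin b)) a := by
  intro hch
  have hapos : 0 < a := ha
  have hpow : 0 < a ^ a := Nat.pow_pos hapos
  -- encode functions Fin a → Fin a as Fin (a^a)
  set e : (Fin a → Fin a) ≃ Fin (a ^ a) := finFunctionFinEquiv with he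
  set φ : Fin b → (Fin a → Fin a) := fun w => e.symm ⟨w % a ^ a, Nat.mod_lt _ hpow⟩ with hφ
  set L : Fin a ⊕ Fin b → Finset ℕ := Sum.elim
    (fun i => (Finset.range a).image (fun t => a * i + t))
    (fun w => Finset.univ.image (fun i : Fin a => a * i + (φ w i : ℕ))) with hLdef
  have hinj1 : ∀ (i x i' x' : ℕ), x < a → x' < a → a * i + x = a * i' + x' → i = i' ∧ x = x' := by
    intro i x i' x' hx hx' h
    have h1 : (a * i + x) / a = i := by rw [Nat.mul_add_div hapos, Nat.div_eq_of_lt hx]; omega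
    have h2 : (a * i' + x') / a = i' := by rw [Nat.mul_add_div hapos, Nat.div_eq_of_lt hx']; omega
    have : i = i' := by rw [← h1, ← h2, h]
    constructor
    · exact this
    · subst this; omega
  have hLcard : ∀ v, (L v).card = a := by
    rintro (i | w)
    · simp only [hLdef, Sum.elim_inl]
      rw [Finset.card_image_of_injective _ (fun x y h => by omega)]
      simp
    · simp only [hLdef, Sum.elim_inr]
      rw [Finset.card_image_of_injective, Finset.card_univ, Fintype.card_fin]
      intro i i' h
      exact Fin.ext (hinj1 i (φ w i) i' (φ w i') (φ w i).isLt (φ w i').isLt h).1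
  obtain ⟨f, hf1, hf2⟩ := hch L hLcard
  -- extract the digit chosen at each left vertex
  have hdigit : ∀ i : Fin a, ∃ t : Fin a, f (Sum.inl i) = a * i + t := by
    intro i
    have := hf1 (Sum.inl i)
    simp only [hLdef, Sum.elim_inl, Finset.mem_image, Finset.mem_range] at this
    obtain ⟨t, ht, heq⟩ := this
    exact ⟨⟨t, ht⟩, heq.symm⟩
  choose ψ hψ using hdigit
  -- the right vertex whose list is exactly the chosen colors
  set w : Fin b := ⟨(e ψ : ℕ), lt_of_lt_of_le (e ψ).isLt hb⟩ with hw
  have hφw : φ w = ψ := by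
    rw [hφ]
    have : (w : ℕ) % a ^ a = (e ψ : ℕ) := by
      rw [hw]; exact Nat.mod_eq_of_lt (e ψ).isLt
    simp only [this]
    have : (⟨(e ψ : ℕ), (e ψ).isLt⟩ : Fin (a ^ a)) = e ψ := rfl
    rw [this, Equiv.symm_apply_apply]
  have hfw := hf1 (Sum.inr w)
  simp only [hLdef, Sum.elim_inr, Finset.mem_image, Finset.mem_univ, true_and] at hfw
  obtain ⟨i, hi⟩ := hfw
  have hadj : (completeBipartiteGraph (Fin a) (Fin b)).Adj (Sum.inl i) (Sum.inr w) := by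
    simp
  apply hf2 hadj
  rw [hψ i, ← hi, hφw]

theorem list_chromatic_completeBipartite (a b : ℕ) (ha : 1 ≤ a) (hb : 1 ≤ b) :
    listChromaticNumber (completeBipartiteGraph (Fin a) (Fin b)) = a + 1 ↔ a ^ a ≤ b := by
  constructor
  · intro h
    by_contra hcon
    push_neg at hcon
    have := aux_choosable_a a b ha hcon
    have hle : listChromaticNumber (completeBipartiteGraph (Fin a) (Fin b)) ≤ a :=
      Nat.sInf_le this
    omega
  · intro hba
    apply le_antisymm
    · exact Nat.sInf_le (aux_choosable_succ a b)
    · apply le_csInf ⟨a + 1, by exact aux_choosable_succ a b⟩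
      intro k hk
      by_contra hcon
      push_neg at hcon
      have hka : k ≤ a := by omega
      exact aux_not_choosable_a a b ha hba (aux_choosable_mono _ hka hk)
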